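/- arXiv:1804.09338 — 2 statements merged into one kernel-verified Lean document; each statement's English description precedes it below -/
import Mathlib

section
/- Let T = (T₁, r₁) ∘ (T₂, r₂) with root r = r₁. Suppose f : V(T) → {0,1,2} with f(r₁) = f(r₂) = 0, f restricted to T₁ − r₁ is an IR2DF of T₁ − r₁ with f(N_{T₁}[r₁]) = 0 (so f|_{T₁} is not an IR2DF of T₁), and f|_{T₂} is an IR2DF of T₂ with f(r₂) = 0. Then f is not an IR2DF of T, f(N_T[r]) = 0, and f restricted to T − r is an IR2DF of T − r. -/
open scoped Classical

open Finset

noncomputable def nbrSum {V : Type*} [Fintype V] (G : SimpleGraph V) (f : V → ℕ) (v : V) : ℕ :=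
  ∑ u ∈ Finset.univ.filter (fun u => G.Adj v u), f u

/-- `f(N[v])`: sum of `f` over the closed neighborhood of `v`. -/
noncomputable def closedNbrSum {V : Type*} [Fintype V] (G : SimpleGraph V) (f : V → ℕ) (v : V) : ℕ :=
  f v + nbrSum G f v

def IsR2DF {V : Type*} [Fintype V] (G : SimpleGraph V) (f : V → ℕ) : Prop :=
  (∀ v, f v ≤ 2) ∧ ∀ v, f v = 0 → 2 ≤ nbrSum G f v

/-- `f` is an independent Roman {2}-dominating function on `G`. -/
def IsIR2DF {V : Type*} [Fintype V] (G : SimpleGraph V) (f : V → ℕ) : Prop :=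
  IsR2DF G f ∧ ∀ ⦃u v : V⦄, G.Adj u v → f u = 0 ∨ f v = 0

/-- One-directional relation generating the composition `(T₁,r₁) ∘ (T₂,r₂)`. -/
def treeCompRel {V₁ V₂ : Type*} (T₁ : SimpleGraph V₁) (T₂ : SimpleGraph V₂) (r₁ : V₁) (r₂ : V₂) :
    (V₁ ⊕ V₂) → (V₁ ⊕ V₂) → Prop
  | .inl a, .inl b => T₁.Adj a b
  | .inr a, .inr b => T₂.Adj a b
  | .inl a, .inr b => a = r₁ ∧ b = r₂
  | .inr _, .inl _ => False

/-- The composition `(T₁,r₁) ∘ (T₂,r₂)`: disjoint union plus the edge `r₁r₂`. -/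
def compGraph {V₁ V₂ : Type*} (T₁ : SimpleGraph V₁) (T₂ : SimpleGraph V₂) (r₁ : V₁) (r₂ : V₂) :
    SimpleGraph (V₁ ⊕ V₂) :=
  SimpleGraph.fromRel (treeCompRel T₁ T₂ r₁ r₂)

/-- The graph `G - r` obtained by deleting the vertex `r`. -/
def delVert {V : Type*} (G : SimpleGraph V) (r : V) : SimpleGraph {v : V // v ≠ r} :=
  SimpleGraph.induce {v : V | v ≠ r} G

section aux
variable {V₁ V₂ : Type*} {T₁ : SimpleGraph V₁} {T₂ : SimpleGraph V₂} {r₁ : V₁} {r₂ : V₂}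

lemma comp_adj_ll {a b : V₁} : (compGraph T₁ T₂ r₁ r₂).Adj (.inl a) (.inl b) ↔ T₁.Adj a b := by
  constructor
  · rintro ⟨hne, h | h⟩
    · exact h
    · exact h.symm
  · intro h; exact ⟨by simpa using h.ne, Or.inl h⟩

lemma comp_adj_rr {a b : V₂} : (compGraph T₁ T₂ r₁ r₂).Adj (.inr a) (.inr b) ↔ T₂.Adj a b := by
  constructor
  · rintro ⟨hne, h | h⟩
    · exact h
    · exact h.symm
  · intro h; exact ⟨by simpa using h.ne, Or.inl h⟩

lemma comp_adj_lr {a : V₁} {b : V₂} :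
    (compGraph T₁ T₂ r₁ r₂).Adj (.inl a) (.inr b) ↔ a = r₁ ∧ b = r₂ := by
  constructor
  · rintro ⟨hne, h | h⟩
    · exact h
    · exact h.elim
  · rintro ⟨rfl, rfl⟩; exact ⟨by simp, Or.inl ⟨rfl, rfl⟩⟩

lemma delVert_adj {V : Type*} {G : SimpleGraph V} {r : V} {u v : {v : V // v ≠ r}} :
    (delVert G r).Adj u v ↔ G.Adj u.1 v.1 := Iff.rfl

end aux

theorem stmt_9 {V₁ V₂ : Type*} [Fintype V₁] [Fintype V₂] [DecidableEq V₁] [DecidableEq V₂]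
    (T₁ : SimpleGraph V₁) (T₂ : SimpleGraph V₂) (hT₁ : T₁.IsTree) (hT₂ : T₂.IsTree)
    (r₁ : V₁) (r₂ : V₂)
    (f : V₁ ⊕ V₂ → ℕ) (hb : ∀ x, f x ≤ 2)
    (h0 : f (Sum.inl r₁) = 0) (h0' : f (Sum.inr r₂) = 0)
    (hdel₁ : IsIR2DF (delVert T₁ r₁) (fun v => f (Sum.inl v.1)))
    (hN₁ : closedNbrSum T₁ (fun v => f (Sum.inl v)) r₁ = 0)
    (hnot₁ : ¬ IsIR2DF T₁ (fun v => f (Sum.inl v)))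
    (hf₂ : IsIR2DF T₂ (fun v => f (Sum.inr v))) :
    ¬ IsIR2DF (compGraph T₁ T₂ r₁ r₂) f ∧
      closedNbrSum (compGraph T₁ T₂ r₁ r₂) f (Sum.inl r₁) = 0 ∧
      IsIR2DF (delVert (compGraph T₁ T₂ r₁ r₂) (Sum.inl r₁)) (fun v => f v.1) := by
  -- from hN₁: every T₁-neighbor u of r₁ has f (inl u) = 0
  have hnbr₁ : ∀ u, T₁.Adj r₁ u → f (Sum.inl u) = 0 := by
    intro u hu
    have hs : nbrSum T₁ (fun v => f (Sum.inl v)) r₁ = 0 := by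
      have := hN₁
      unfold closedNbrSum at this
      omega
    unfold nbrSum at hs
    have := (Finset.sum_eq_zero_iff.mp hs) u (by simp [hu])
    simpa using this
  have hclosed : closedNbrSum (compGraph T₁ T₂ r₁ r₂) f (Sum.inl r₁) = 0 := by
    unfold closedNbrSum nbrSum
    rw [h0, zero_add]
    apply Finset.sum_eq_zero
    intro u hu
    rw [Finset.mem_filter] at hu
    rcases u with a | a
    · exact hnbr₁ a (comp_adj_ll.mp hu.2)
    · obtain ⟨-, rfl⟩ := comp_adj_lr.mp hu.2
      exact h0'
  refine ⟨?_, hclosed, ?_⟩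
  · intro h
    have h2 := h.1.2 (Sum.inl r₁) h0
    have : nbrSum (compGraph T₁ T₂ r₁ r₂) f (Sum.inl r₁) = 0 := by
      unfold closedNbrSum at hclosed; omega
    omega
  · refine ⟨⟨fun v => hb v.1, ?_⟩, ?_⟩
    · rintro ⟨v, hv⟩ hv0
      rcases v with a | a
      · -- a ≠ r₁
        have ha : a ≠ r₁ := fun h => hv (by rw [h])
        have h2 := hdel₁.1.2 ⟨a, ha⟩ hv0
        refine le_trans h2 (le_of_eq ?_)
        unfold nbrSum
        apply Finset.sum_bij (fun (u : {v : V₁ // v ≠ r₁}) _ =>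
          (⟨Sum.inl u.1, by simp [u.2]⟩ : {x : V₁ ⊕ V₂ // x ≠ Sum.inl r₁}))
        · rintro ⟨u, hu⟩ hmem
          rw [Finset.mem_filter] at hmem ⊢
          exact ⟨Finset.mem_univ _, delVert_adj.mpr (comp_adj_ll.mpr hmem.2)⟩
        · rintro ⟨u, hu⟩ - ⟨w, hw⟩ - h
          simp only [Subtype.mk.injEq, Sum.inl.injEq] at h
          exact Subtype.ext h
        · rintro ⟨u, hu⟩ hmem
          rw [Finset.mem_filter] at hmem
          have hadj := delVert_adj.mp hmem.2
          rcases u with b | b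
          · have hb' : b ≠ r₁ := fun h => hu (by rw [h])
            refine ⟨⟨b, hb'⟩, ?_, rfl⟩
            rw [Finset.mem_filter]
            exact ⟨Finset.mem_univ _, delVert_adj.mpr (comp_adj_ll.mp hadj)⟩
          · obtain ⟨h1, -⟩ := comp_adj_lr.mp hadj
            exact absurd h1 ha
        · intros; rfl
      · -- right side vertex
        have h2 := hf₂.1.2 a hv0
        refine le_trans h2 (le_of_eq ?_)
        unfold nbrSum
        apply Finset.sum_bij (fun (u : V₂) _ =>
          (⟨Sum.inr u, by simp⟩ : {x : V₁ ⊕ V₂ // x ≠ Sum.inl r₁}))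
        · intro u hmem
          rw [Finset.mem_filter] at hmem ⊢
          exact ⟨Finset.mem_univ _, delVert_adj.mpr (comp_adj_rr.mpr hmem.2)⟩
        · rintro u - w - h
          simpa using h
        · rintro ⟨u, hu⟩ hmem
          rw [Finset.mem_filter] at hmem
          have hadj := delVert_adj.mp hmem.2
          rcases u with b | b
          · exfalso
            obtain ⟨rfl, -⟩ := comp_adj_lr.mp hadj.symm
            exact hu rfl
          · refine ⟨b, ?_, rfl⟩
            rw [Finset.mem_filter]
            exact ⟨Finset.mem_univ _, comp_adj_rr.mp hadj⟩
        · intros; rfl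
    · rintro ⟨u, hu⟩ ⟨v, hv⟩ hadj
      rw [delVert_adj] at hadj
      rcases u with a | a <;> rcases v with b | b
      · have ha : a ≠ r₁ := fun h => hu (by rw [h])
        have hbb : b ≠ r₁ := fun h => hv (by rw [h])
        exact hdel₁.2 (u := ⟨a, ha⟩) (v := ⟨b, hbb⟩) (delVert_adj.mpr (comp_adj_ll.mp hadj))
      · obtain ⟨rfl, -⟩ := comp_adj_lr.mp hadj
        exact absurd rfl hu
      · obtain ⟨rfl, -⟩ := comp_adj_lr.mp hadj.symm
        exact absurd rfl hv
      · exact hf₂.2 (comp_adj_rr.mp hadj)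
end

section
/- Let T = (T₁, r₁) ∘ (T₂, r₂) with root r = r₁. If f : V(T) → {0,1,2} satisfies: f(r₁) = 0, f is not an IR2DF of T, f restricted to T − r is an IR2DF of T − r, and f(N_T[r]) = 1, then exactly one of the following holds: (a) f(r₂) = 0, f|_{T₂} is an IR2DF of T₂, f|_{T₁} is not an IR2DF of T₁, f(N_{T₁}[r₁]) = 1, and f restricted to T₁ − r₁ is an IR2DF of T₁ − r₁; or (b) f(r₂) = 1, f|_{T₂} is an IR2DF of T₂, f|_{T₁} is not an IR2DF of T₁, f(N_{T₁}[r₁]) = 0, and f restricted to T₁ − r₁ is an IR2DF of T₁ − r₁. -/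
open scoped Classical
open Finset

section aux
variable {V₁ V₂ : Type*} [Fintype V₁] [Fintype V₂] [DecidableEq V₁] [DecidableEq V₂]
  (T₁ : SimpleGraph V₁) (T₂ : SimpleGraph V₂) (r₁ : V₁) (r₂ : V₂)

lemma compAdj_ll {a b : V₁} : (compGraph T₁ T₂ r₁ r₂).Adj (Sum.inl a) (Sum.inl b) ↔ T₁.Adj a b := by
  rw [compGraph, SimpleGraph.fromRel_adj]
  show Sum.inl a ≠ Sum.inl b ∧ (T₁.Adj a b ∨ T₁.Adj b a) ↔ _
  constructor
  · rintro ⟨h1, h2 | h2⟩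
    · exact h2
    · exact h2.symm
  · intro h; exact ⟨by simpa using h.ne, Or.inl h⟩

lemma compAdj_rr {a b : V₂} : (compGraph T₁ T₂ r₁ r₂).Adj (Sum.inr a) (Sum.inr b) ↔ T₂.Adj a b := by
  rw [compGraph, SimpleGraph.fromRel_adj]
  show Sum.inr a ≠ Sum.inr b ∧ (T₂.Adj a b ∨ T₂.Adj b a) ↔ _
  constructor
  · rintro ⟨h1, h2 | h2⟩
    · exact h2
    · exact h2.symm
  · intro h; exact ⟨by simpa using h.ne, Or.inl h⟩

lemma compAdj_lr {a : V₁} {b : V₂} :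
    (compGraph T₁ T₂ r₁ r₂).Adj (Sum.inl a) (Sum.inr b) ↔ a = r₁ ∧ b = r₂ := by
  rw [compGraph, SimpleGraph.fromRel_adj]
  show Sum.inl a ≠ Sum.inr b ∧ ((a = r₁ ∧ b = r₂) ∨ False) ↔ _
  simp

lemma compAdj_rl {a : V₂} {b : V₁} :
    (compGraph T₁ T₂ r₁ r₂).Adj (Sum.inr a) (Sum.inl b) ↔ b = r₁ ∧ a = r₂ := by
  rw [compGraph, SimpleGraph.fromRel_adj]
  show Sum.inr a ≠ Sum.inl b ∧ (False ∨ (b = r₁ ∧ a = r₂)) ↔ _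
  simp

lemma nbrSum_ite {V : Type*} [Fintype V] (G : SimpleGraph V) (f : V → ℕ) (v : V) :
    nbrSum G f v = ∑ u, if G.Adj v u then f u else 0 := Finset.sum_filter _ _

lemma sum_subtype_ne {α : Type*} [Fintype α] [DecidableEq α] (r : α) (h : α → ℕ) (h0 : h r = 0) :
    ∑ x : {v : α // v ≠ r}, h x.1 = ∑ x, h x := by
  rw [← Finset.sum_subtype (Finset.univ.erase r) (fun x => by simp) h,
    Finset.sum_erase _ h0]

lemma nbrSum_comp_inl (f : V₁ ⊕ V₂ → ℕ) (v : V₁) :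
    nbrSum (compGraph T₁ T₂ r₁ r₂) f (Sum.inl v) =
      nbrSum T₁ (fun u => f (Sum.inl u)) v + (if v = r₁ then f (Sum.inr r₂) else 0) := by
  rw [nbrSum_ite, nbrSum_ite, Fintype.sum_sum_type]
  congr 1
  · refine Finset.sum_congr rfl fun u _ => ?_
    rw [compAdj_ll]
  · have : ∀ u : V₂, (if (compGraph T₁ T₂ r₁ r₂).Adj (Sum.inl v) (Sum.inr u) then f (Sum.inr u) else 0)
        = if v = r₁ ∧ u = r₂ then f (Sum.inr u) else 0 := by
      intro u; rw [compAdj_lr]; convert rfl using 2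
    rw [Finset.sum_congr rfl fun u _ => this u]
    by_cases hv : v = r₁ <;> simp [hv]

lemma nbrSum_comp_inr (f : V₁ ⊕ V₂ → ℕ) (v : V₂) :
    nbrSum (compGraph T₁ T₂ r₁ r₂) f (Sum.inr v) =
      nbrSum T₂ (fun u => f (Sum.inr u)) v + (if v = r₂ then f (Sum.inl r₁) else 0) := by
  rw [nbrSum_ite, nbrSum_ite, Fintype.sum_sum_type]
  rw [add_comm (∑ a₁ : V₁, _)]
  congr 1
  · refine Finset.sum_congr rfl fun u _ => ?_
    rw [compAdj_rr]
  · have : ∀ u : V₁, (if (compGraph T₁ T₂ r₁ r₂).Adj (Sum.inr v) (Sum.inl u) then f (Sum.inl u) else 0)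
        = if u = r₁ ∧ v = r₂ then f (Sum.inl u) else 0 := by
      intro u; rw [compAdj_rl]; convert rfl using 2
    rw [Finset.sum_congr rfl fun u _ => this u]
    by_cases hv : v = r₂ <;> simp [hv]

lemma delAdj {V : Type*} (G : SimpleGraph V) (r : V) (a b : {v : V // v ≠ r}) :
    (delVert G r).Adj a b ↔ G.Adj a.1 b.1 := Iff.rfl

lemma nbrSum_del {V : Type*} [Fintype V] [DecidableEq V] (G : SimpleGraph V) (r : V)
    (f : V → ℕ) (hf : f r = 0) (x : {v : V // v ≠ r}) :
    nbrSum (delVert G r) (fun v => f v.1) x = nbrSum G f x.1 := by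
  rw [nbrSum_ite, nbrSum_ite]
  have : ∀ u : {v : V // v ≠ r},
      (if (delVert G r).Adj x u then f u.1 else 0) = if G.Adj x.1 u.1 then f u.1 else 0 := by
    intro u; rw [delAdj]
  rw [Finset.sum_congr rfl fun u _ => this u]
  exact sum_subtype_ne r (fun u => if G.Adj x.1 u then f u else 0) (by simp [hf])

end aux

theorem stmt_17 {V₁ V₂ : Type*} [Fintype V₁] [Fintype V₂] [DecidableEq V₁] [DecidableEq V₂]
    (T₁ : SimpleGraph V₁) (T₂ : SimpleGraph V₂) (hT₁ : T₁.IsTree) (hT₂ : T₂.IsTree)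
    (r₁ : V₁) (r₂ : V₂)
    (f : V₁ ⊕ V₂ → ℕ) (hb : ∀ x, f x ≤ 2)
    (h0 : f (Sum.inl r₁) = 0)
    (hnot : ¬ IsIR2DF (compGraph T₁ T₂ r₁ r₂) f)
    (hdel : IsIR2DF (delVert (compGraph T₁ T₂ r₁ r₂) (Sum.inl r₁)) (fun v => f v.1))
    (hN : closedNbrSum (compGraph T₁ T₂ r₁ r₂) f (Sum.inl r₁) = 1) :
    Xor'
      (f (Sum.inr r₂) = 0 ∧ IsIR2DF T₂ (fun v => f (Sum.inr v)) ∧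
        ¬ IsIR2DF T₁ (fun v => f (Sum.inl v)) ∧
        closedNbrSum T₁ (fun v => f (Sum.inl v)) r₁ = 1 ∧
        IsIR2DF (delVert T₁ r₁) (fun v => f (Sum.inl v.1)))
      (f (Sum.inr r₂) = 1 ∧ IsIR2DF T₂ (fun v => f (Sum.inr v)) ∧
        ¬ IsIR2DF T₁ (fun v => f (Sum.inl v)) ∧
        closedNbrSum T₁ (fun v => f (Sum.inl v)) r₁ = 0 ∧
        IsIR2DF (delVert T₁ r₁) (fun v => f (Sum.inl v.1))) := by
  classical
  -- decompose hN
  have hsum : nbrSum T₁ (fun u => f (Sum.inl u)) r₁ + f (Sum.inr r₂) = 1 := by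
    have := hN
    rw [closedNbrSum, h0, zero_add, nbrSum_comp_inl] at this
    simpa using this
  -- T₂ is an IR2DF
  have hT2 : IsIR2DF T₂ (fun v => f (Sum.inr v)) := by
    refine ⟨⟨fun v => hb _, fun v hv => ?_⟩, fun u v huv => ?_⟩
    · have h2 := hdel.1.2 ⟨Sum.inr v, by simp⟩ hv
      rw [nbrSum_del _ _ f h0, nbrSum_comp_inr] at h2
      rcases eq_or_ne v r₂ with h | h <;> simpa [h, h0] using h2
    · exact hdel.2 ((delAdj (compGraph T₁ T₂ r₁ r₂) (Sum.inl r₁)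
        ⟨Sum.inr u, by simp⟩ ⟨Sum.inr v, by simp⟩).2 ((compAdj_rr T₁ T₂ r₁ r₂).2 huv))
  -- T₁ is not an IR2DF
  have hT1not : ¬ IsIR2DF T₁ (fun v => f (Sum.inl v)) := by
    intro h
    have := h.1.2 r₁ h0
    omega
  -- T₁ - r₁ is an IR2DF
  have hT1del : IsIR2DF (delVert T₁ r₁) (fun v => f (Sum.inl v.1)) := by
    refine ⟨⟨fun v => hb _, fun v hv => ?_⟩, fun u v huv => ?_⟩
    · have h2 := hdel.1.2 ⟨Sum.inl v.1, by simp [v.2]⟩ hv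
      rw [nbrSum_del _ _ f h0, nbrSum_comp_inl] at h2
      have hvr : v.1 ≠ r₁ := v.2
      rw [nbrSum_del _ _ (fun u => f (Sum.inl u)) h0]
      simpa [hvr] using h2
    · have huv' : T₁.Adj u.1 v.1 := huv
      exact hdel.2 ((delAdj (compGraph T₁ T₂ r₁ r₂) (Sum.inl r₁)
        ⟨Sum.inl u.1, by simp [u.2]⟩ ⟨Sum.inl v.1, by simp [v.2]⟩).2
        ((compAdj_ll T₁ T₂ r₁ r₂).2 huv'))
  have hc1 : closedNbrSum T₁ (fun v => f (Sum.inl v)) r₁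
      = nbrSum T₁ (fun u => f (Sum.inl u)) r₁ := by
    rw [closedNbrSum, h0, zero_add]
  rcases Nat.eq_zero_or_pos (f (Sum.inr r₂)) with hr | hr
  · left
    refine ⟨⟨hr, hT2, hT1not, by omega, hT1del⟩, ?_⟩
    rintro ⟨h1, -⟩
    omega
  · right
    refine ⟨⟨by omega, hT2, hT1not, by omega, hT1del⟩, ?_⟩
    rintro ⟨h1, -⟩
    omega
end
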